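/- arXiv:1602.08912 — 4 statements merged into one kernel-verified Lean document; each statement's English description precedes it below -/
import Mathlib

section
/- Let g be an antagonistic game with players a and b. If s_a is a subgame-optimal strategy for player a, then for every history h and every run ρ of the future game g^h such that Player 1 has a winning strategy in the future threshold game (g^h)_{a,ρ}, the shifted strategy s_a^h is a winning strategy in (g^h)_{a,ρ}. Consequently, if all future threshold games of g are determined and both players have subgame-optimal strategies using m bits of memory, then every future threshold game of g is determined via a winning strategy using m bits of memory. -/
namespace GG

variable {V C A : Type}

/-- Append a finite list in front of an infinite sequence. -/
def appSeq (l : List V) (ρ : ℕ → V) : ℕ → V :=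
  fun n => if n < l.length then l.getD n (ρ 0) else ρ (n - l.length)

/-- Glue two histories, identifying the last vertex of `l` with the first of `l'`. -/
def glueL (l l' : List V) : List V := l.dropLast ++ l'

/-- Glue a history with a run, identifying the last vertex of `l` with the start of `ρ`. -/
def glueR (l : List V) (ρ : ℕ → V) : ℕ → V := appSeq l.dropLast ρ

/-- Ultimately periodic (regular) sequence. -/
def UltPeriodic (ρ : ℕ → V) : Prop := ∃ k p : ℕ, 0 < p ∧ ∀ n, k ≤ n → ρ (n + p) = ρ n

/-- Strict weak order: irreflexive, transitive, with transitive incomparability. -/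
def SWO (r : (ℕ → C) → (ℕ → C) → Prop) : Prop :=
  (∀ x, ¬ r x x) ∧ (∀ x y z, r x y → r y z → r x z) ∧
    (∀ x y z, ¬ r x y → ¬ r y z → ¬ r x z)

/-- A strategy uses `m` bits of memory: it is induced by a strategic update
`σ : V × {0,1}^m → V × {0,1}^m` together with an initial memory content. -/
def UsesMem (m : ℕ) (s : List V → V) : Prop :=
  ∃ (σ : V × (Fin m → Bool) → V × (Fin m → Bool)) (M₀ : Fin m → Bool),
    ∀ (l : List V) (v : V),
      s (l ++ [v]) = (σ (v, l.foldl (fun M u => (σ (u, M)).2) M₀)).1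

/-- A finite-memory strategy. -/
def FinMem (s : List V → V) : Prop := ∃ m, UsesMem m s

/-- Regular language: recognized by a deterministic finite automaton. -/
def RegLang {α : Type} (L : Set (List α)) : Prop :=
  ∃ (Q : Type) (_ : Fintype Q) (step : Q → α → Q) (init : Q) (acc : Set Q),
    ∀ w : List α, w ∈ L ↔ w.foldl step init ∈ acc

/-- Repeat a finite word `n` times. -/
def repW (l : List C) (n : ℕ) : List C := (List.replicate n l).flatten

/-- The infinite word `u · w^ω` (with default letter `d`, unused when `w ≠ []`). -/
def extWord (d : C) (u w : List C) : ℕ → C := fun n =>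
  if n < u.length then u.getD n d else w.getD ((n - u.length) % w.length) d

/-- The regular-Mont condition for a preference on infinite color sequences. -/
def RegularMont (prec : (ℕ → C) → (ℕ → C) → Prop) : Prop :=
  ∀ (d : C) (h₀ h₁ h₂ h₃ : List C), h₁ ≠ [] → h₃ ≠ [] →
    (∀ n : ℕ, prec (extWord d (h₀ ++ repW h₁ n ++ h₂) h₃)
        (extWord d (h₀ ++ repW h₁ (n + 1) ++ h₂) h₃)) →
    prec (extWord d (h₀ ++ h₂) h₃) (extWord d h₀ h₁)

/-- The weak optimality-is-regular property of a preference. -/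
def WeakOIR (prec : (ℕ → C) → (ℕ → C) → Prop) : Prop :=
  ∀ p q : ℕ → C, UltPeriodic p → UltPeriodic q →
    ∃ M : Set (List C), RegLang M ∧ ∀ h : List C, h ∈ M ↔ prec (appSeq h p) (appSeq h q)

/-- Automatic-piecewise prefix-linearity of a preference on `C^ω` (word level). -/
def APPLword (prec : (ℕ → C) → (ℕ → C) → Prop) : Prop :=
  ∃ (Q : Type) (_ : Fintype Q) (step : Q → C → Q) (init : Q),
    ∀ h h' : List C, h.foldl step init = h'.foldl step init →
      ∀ p q : ℕ → C,
        (prec (appSeq h p) (appSeq h q) ↔ prec (appSeq h' p) (appSeq h' q))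

/-- A multi-player game played on a finite directed graph in which every
vertex has an outgoing edge. Players compare runs via color traces. -/
structure Game (V C A : Type) where
  edge : V → V → Prop
  serial : ∀ v, ∃ w, edge v w
  start : V
  owner : V → A
  color : V → C
  pref : A → (ℕ → C) → (ℕ → C) → Prop

/-- Shifted strategy `s^h`. -/
def shiftStrat (l : List V) (s : List V → V) : List V → V :=
  fun l' => s (l.dropLast ++ l')

namespace Game

variable (g : Game V C A)

def lastV (l : List V) : V := l.getLast?.getD g.start

/-- Histories: finite paths starting at the start vertex. -/
def IsHist (l : List V) : Prop :=
  l ≠ [] ∧ l.head? = some g.start ∧ l.Chain' g.edge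

/-- Runs: infinite paths starting at the start vertex. -/
def IsRun (ρ : ℕ → V) : Prop :=
  ρ 0 = g.start ∧ ∀ n, g.edge (ρ n) (ρ (n + 1))

/-- Runs are compared via their color traces. -/
def runPref (a : A) (ρ ρ' : ℕ → V) : Prop :=
  g.pref a (fun n => g.color (ρ n)) (fun n => g.color (ρ' n))

/-- Validity of a strategy on the set `P` of controlled vertices. -/
def ValidOn (P : V → Prop) (s : List V → V) : Prop :=
  ∀ l, g.IsHist l → P (g.lastV l) → g.edge (g.lastV l) (s l)

def ValidStrat (a : A) (s : List V → V) : Prop :=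
  g.ValidOn (fun v => g.owner v = a) s

/-- Validity for the coalition of all players other than `a`. -/
def ValidCo (a : A) (s : List V → V) : Prop :=
  g.ValidOn (fun v => g.owner v ≠ a) s

def _root_.GG.histUpTo (ρ : ℕ → V) (n : ℕ) : List V := (List.range (n + 1)).map ρ

def _root_.GG.CompatOn (P : V → Prop) (s : List V → V) (ρ : ℕ → V) : Prop :=
  ∀ n, P (ρ n) → ρ (n + 1) = s (GG.histUpTo ρ n)

/-- A run is compatible with a strategy of player `a`. -/
def Compat (a : A) (s : List V → V) (ρ : ℕ → V) : Prop :=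
  GG.CompatOn (fun v => g.owner v = a) s ρ

def CompatCo (a : A) (s : List V → V) (ρ : ℕ → V) : Prop :=
  GG.CompatOn (fun v => g.owner v ≠ a) s ρ

/-- `s` is a winning strategy of Player 1 (= player `a`) in the threshold game
`g_{a,ρ}`: every compatible run is strictly preferred to `ρ`. -/
def Wins1 (a : A) (ρ : ℕ → V) (s : List V → V) : Prop :=
  g.ValidStrat a s ∧ ∀ ρ', g.IsRun ρ' → g.Compat a s ρ' → g.runPref a ρ ρ'

/-- `s` is a winning strategy of Player 2 (the coalition) in the threshold game `g_{a,ρ}`. -/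
def Wins2 (a : A) (ρ : ℕ → V) (s : List V → V) : Prop :=
  g.ValidCo a s ∧ ∀ ρ', g.IsRun ρ' → g.CompatCo a s ρ' → ¬ g.runPref a ρ ρ'

/-- Player 1 wins the non-strict threshold game for `a` and `ρ` with `s`. -/
def Wins1NS (a : A) (ρ : ℕ → V) (s : List V → V) : Prop :=
  g.ValidStrat a s ∧ ∀ ρ', g.IsRun ρ' → g.Compat a s ρ' → ¬ g.runPref a ρ' ρ

/-- Player 2 wins the non-strict threshold game for `a` and `ρ` with `s`. -/
def Wins2NS (a : A) (ρ : ℕ → V) (s : List V → V) : Prop :=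
  g.ValidCo a s ∧ ∀ ρ', g.IsRun ρ' → g.CompatCo a s ρ' → g.runPref a ρ' ρ

/-- The future game `g^h` after history `l`. -/
def future (l : List V) : Game V C A where
  edge := g.edge
  serial := g.serial
  start := g.lastV l
  owner := g.owner
  color := g.color
  pref := fun a p q =>
    g.pref a (appSeq (l.dropLast.map g.color) p) (appSeq (l.dropLast.map g.color) q)

/-- The guarantee `γ_a(s)` of a strategy. -/
def gam (a : A) (s : List V → V) : Set (ℕ → V) :=
  {ρ | g.IsRun ρ ∧ ∃ ρ', g.IsRun ρ' ∧ g.Compat a s ρ' ∧ ¬ g.runPref a ρ ρ'}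

/-- The best guarantee `Γ_a`. -/
def Gam (a : A) : Set (ℕ → V) :=
  ⋂ s ∈ {s : List V → V | g.ValidStrat a s}, g.gam a s

def Optimal (a : A) (s : List V → V) : Prop := g.gam a s = g.Gam a

def OptimalAt (a : A) (s : List V → V) (l : List V) : Prop :=
  (g.future l).Optimal a (shiftStrat l s)

def SubgameOptimal (a : A) (s : List V → V) : Prop :=
  ∀ l, g.IsHist l → g.OptimalAt a s l

/-- A history is compatible with a strategy of player `a`. -/
def HistCompat (a : A) (s : List V → V) (l : List V) : Prop :=
  ∀ i : ℕ, i + 1 < l.length → g.owner (l.getD i g.start) = a →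
    l.getD (i + 1) g.start = s (l.take (i + 1))

def ConsistentOptimal (a : A) (s : List V → V) : Prop :=
  ∀ l, g.IsHist l → g.HistCompat a s l → g.OptimalAt a s l

/-- The history of the play induced by a strategy profile, up to stage `n`. -/
def playHist (prof : A → List V → V) : ℕ → List V
  | 0 => [g.start]
  | n + 1 =>
      playHist prof n ++
        [prof (g.owner (g.lastV (playHist prof n))) (playHist prof n)]

/-- The run induced by a strategy profile. -/
def play (prof : A → List V → V) : ℕ → V := fun n => g.lastV (g.playHist prof n)

/-- Nash equilibrium. -/
def IsNash [DecidableEq A] (prof : A → List V → V) : Prop :=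
  (∀ a, g.ValidStrat a (prof a)) ∧
    ∀ a s', g.ValidStrat a s' →
      ¬ g.runPref a (g.play prof) (g.play (Function.update prof a s'))

/-- Optimality of the strategy `s` of player `a` is regular using `D` bits. -/
def OptRegBits (a : A) (s : List V → V) (D : ℕ) : Prop :=
  ∃ (Q : Type) (_ : Fintype Q) (step : Q → V → Q) (init : Q) (acc : Set Q),
    Fintype.card Q ≤ 2 ^ D ∧
      ∀ l, g.IsHist l → (l.foldl step init ∈ acc ↔ g.OptimalAt a s l)

/-- Player `a` has the optimality-is-regular property in `g`. -/
def OIR (a : A) : Prop :=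
  ∀ s, g.ValidStrat a s → FinMem s →
    ∃ (Q : Type) (_ : Fintype Q) (step : Q → V → Q) (init : Q) (acc : Set Q),
      ∀ l, g.IsHist l → (l.foldl step init ∈ acc ↔ g.OptimalAt a s l)

/-- The two-player antagonistic game associated to player `a`: Player `true`
controls `V_a` with preference `≺_a`, Player `false` the remaining vertices
with the inverse preference. -/
def anta [DecidableEq A] (a : A) : Game V C Bool where
  edge := g.edge
  serial := g.serial
  start := g.start
  owner := fun v => decide (g.owner v = a)
  color := g.color
  pref := fun p x y => if p = true then g.pref a x y else g.pref a y x

/-- The cumulative glued histories `h₀⌢h₁⌢…⌢h_n`. -/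
def _root_.GG.cumul (h₀ : List V) (hs : ℕ → List V) : ℕ → List V
  | 0 => h₀
  | n + 1 => glueL (GG.cumul h₀ hs n) (hs n)

/-- The preference of player `a` is Mont in `g`. -/
def MontPref (a : A) : Prop :=
  ∀ (h₀ : List V) (ρ : ℕ → V) (hs : ℕ → List V),
    g.IsHist h₀ → UltPeriodic ρ →
    (∀ n, g.IsRun (glueR (GG.cumul h₀ hs n) ρ)) →
    (∀ n, g.runPref a (glueR (GG.cumul h₀ hs n) ρ) (glueR (GG.cumul h₀ hs (n + 1)) ρ)) →
    ∀ lim : ℕ → V,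
      (∀ n k, k < (GG.cumul h₀ hs n).dropLast.length →
        lim k = (GG.cumul h₀ hs n).dropLast.getD k g.start) →
      (∀ N, ∃ n, N < (GG.cumul h₀ hs n).dropLast.length) →
      g.runPref a (glueR h₀ ρ) lim

/-- Player `a`'s preference is automatic-piecewise prefix-linear in `g`. -/
def APPLin (a : A) : Prop :=
  ∃ (Q : Type) (_ : Fintype Q) (step : Q → V → Q) (init : Q),
    ∀ h h', g.IsHist h → g.IsHist h' →
      h.foldl step init = h'.foldl step init →
      g.lastV h = g.lastV h' ∧
        ∀ ρ ρ' : ℕ → V,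
          g.IsRun (glueR h ρ) → g.IsRun (glueR h ρ') →
          g.IsRun (glueR h' ρ) → g.IsRun (glueR h' ρ') →
          (g.runPref a (glueR h ρ) (glueR h ρ') ↔ g.runPref a (glueR h' ρ) (glueR h' ρ'))

end Game

end GG

open GG

section Aux

variable {V C : Type}

lemma GG.shift_usesMem {m : ℕ} (l : List V) {s : List V → V} (h : UsesMem m s) :
    UsesMem m (shiftStrat l s) := by
  obtain ⟨σ, M₀, hσ⟩ := h
  refine ⟨σ, l.dropLast.foldl (fun M u => (σ (u, M)).2) M₀, fun l' v => ?_⟩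
  have := hσ (l.dropLast ++ l') v
  simpa [shiftStrat, List.foldl_append, List.append_assoc] using this

namespace GG.Game

variable (g : Game V C Bool)

lemma lastV_glue {l l' : List V} (hl' : l' ≠ []) :
    g.lastV (l.dropLast ++ l') = (g.future l).lastV l' := by
  unfold Game.lastV
  rw [List.getLast?_append_of_ne_nil _ hl', List.getLast?_eq_getLast hl']
  rfl

lemma lastV_eq_getLast {l : List V} (h : l ≠ []) : g.lastV l = l.getLast h := by
  unfold Game.lastV
  rw [List.getLast?_eq_getLast h]
  rfl

lemma glue_isHist {l l' : List V} (hl : g.IsHist l) (hl' : (g.future l).IsHist l') :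
    g.IsHist (l.dropLast ++ l') := by
  obtain ⟨hne, hhd, hch⟩ := hl
  obtain ⟨hne', hhd', hch'⟩ := hl'
  have hstart : l'.head? = some (g.lastV l) := hhd'
  refine ⟨by simp [hne'], ?_, ?_⟩
  · match l, hne with
    | [v], _ =>
        simp only [List.dropLast_singleton, List.nil_append]
        rw [hstart]
        simp only [List.head?_cons, Option.some.injEq] at hhd
        simp [Game.lastV, hhd]
    | v :: w :: tl, _ =>
        rw [List.head?_append]
        simpa using hhd
  · have hdec : l.dropLast ++ [l.getLast hne] = l := List.dropLast_append_getLast hne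
    have hch2 : List.Chain' g.edge (l.dropLast ++ [l.getLast hne]) := by rw [hdec]; exact hch
    obtain ⟨h1, _, h3⟩ := List.isChain_append.mp hch2
    refine List.isChain_append.mpr ⟨h1, hch', fun x hx y hy => ?_⟩
    rw [hstart, g.lastV_eq_getLast hne, Option.mem_def, Option.some.injEq] at hy
    subst hy
    exact h3 x hx _ (by simp)

lemma shift_validOn {P : V → Prop} {s : List V → V} (hs : g.ValidOn P s) {l : List V}
    (hl : g.IsHist l) : (g.future l).ValidOn P (shiftStrat l s) := by
  intro l' h' hP
  have hgl := g.glue_isHist hl h'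
  have hlast := g.lastV_glue (l := l) h'.1
  have := hs _ hgl (by rw [hlast]; exact hP)
  show g.edge ((g.future l).lastV l') (s (l.dropLast ++ l'))
  rwa [hlast] at this

lemma validOn_congr {P Q : V → Prop} (h : ∀ v, P v ↔ Q v) {s : List V → V}
    (hs : g.ValidOn P s) : g.ValidOn Q s :=
  fun l hl hQ => hs l hl ((h _).mpr hQ)

lemma runPref_future (l : List V) (a : Bool) (x y : ℕ → V) :
    (g.future l).runPref a x y ↔ g.pref a
      (appSeq (l.dropLast.map g.color) fun n => g.color (x n))
      (appSeq (l.dropLast.map g.color) fun n => g.color (y n)) := Iff.rfl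

lemma compatOn_congr {P Q : V → Prop} (h : ∀ v, P v ↔ Q v) {s : List V → V} {ρ : ℕ → V}
    (hc : GG.CompatOn P s ρ) : GG.CompatOn Q s ρ :=
  fun n hQ => hc n ((h _).mpr hQ)

lemma win1_shift (p : Bool) {sa : List V → V} (hval : g.ValidStrat p sa)
    (hopt : g.SubgameOptimal p sa) {l : List V} (hl : g.IsHist l) {ρ : ℕ → V}
    (hρ : (g.future l).IsRun ρ) (hw : ∃ s, (g.future l).Wins1 p ρ s) :
    (g.future l).Wins1 p ρ (GG.shiftStrat l sa) := by
  obtain ⟨t, htv, htw⟩ := hw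
  have hvs : (g.future l).ValidStrat p (shiftStrat l sa) := g.shift_validOn hval hl
  refine ⟨hvs, fun ρ' hr' hc' => ?_⟩
  by_contra hnp
  have hmem : ρ ∈ (g.future l).gam p (shiftStrat l sa) := ⟨hρ, ρ', hr', hc', hnp⟩
  have heq := hopt l hl
  unfold Game.OptimalAt Game.Optimal at heq
  rw [heq] at hmem
  have hmem2 : ρ ∈ (g.future l).gam p t := Set.mem_iInter₂.mp hmem t htv
  obtain ⟨-, ρ'', hr'', hc'', hnp''⟩ := hmem2
  exact hnp'' (htw ρ'' hr'' hc'')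

lemma win2_shift (hswo : ∀ p, GG.SWO (g.pref p))
    (hant : ∀ p q, g.pref false p q ↔ g.pref true q p)
    (p : Bool) {sb : List V → V} (hval : g.ValidStrat (!p) sb)
    (hopt : g.SubgameOptimal (!p) sb) {l : List V} (hl : g.IsHist l) {ρ : ℕ → V}
    (hρ : (g.future l).IsRun ρ) (hw : ∃ s, (g.future l).Wins2 p ρ s) :
    (g.future l).Wins2 p ρ (GG.shiftStrat l sb) := by
  obtain ⟨t, htv, htw⟩ := hw
  have hbool : ∀ v : V, g.owner v = !p ↔ g.owner v ≠ p := by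
    intro v; cases p <;> cases h : g.owner v <;> simp
  have hflip : ∀ u v, g.pref p u v ↔ g.pref (!p) v u := by
    intro u v; cases p <;> simp [hant]
  have hvs : (g.future l).ValidCo p (shiftStrat l sb) :=
    (g.future l).validOn_congr hbool (g.shift_validOn hval hl)
  refine ⟨hvs, fun ρ' hr' hc' hpref => ?_⟩
  have hc'b : (g.future l).Compat (!p) (shiftStrat l sb) ρ' :=
    GG.Game.compatOn_congr (fun v => (hbool v).symm) hc'
  have hirr : ¬ (g.future l).runPref (!p) ρ' ρ' := by
    rw [g.runPref_future]; exact (hswo (!p)).1 _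
  have hmem : ρ' ∈ (g.future l).gam (!p) (shiftStrat l sb) := ⟨hr', ρ', hr', hc'b, hirr⟩
  have heq := hopt l hl
  unfold Game.OptimalAt Game.Optimal at heq
  rw [heq] at hmem
  have htv' : (g.future l).ValidStrat (!p) t :=
    (g.future l).validOn_congr (fun v => (hbool v).symm) htv
  have hmem2 : ρ' ∈ (g.future l).gam (!p) t := Set.mem_iInter₂.mp hmem t htv'
  obtain ⟨-, ρ'', hr'', hc'', hnp''⟩ := hmem2
  have htw2 : ¬ (g.future l).runPref p ρ ρ'' :=
    htw ρ'' hr'' (GG.Game.compatOn_congr hbool hc'')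
  rw [g.runPref_future, hflip] at hpref htw2
  rw [g.runPref_future] at hnp''
  exact (hswo (!p)).2.2 _ _ _ hnp'' htw2 hpref

end GG.Game

end Aux

/-- Subgame-optimal strategies win all winnable future threshold games; hence
uniformly finite-memory subgame-optimal strategies for both players yield
uniform finite-memory determinacy of all future threshold games. -/
theorem stmt2
    {V C : Type} [Fintype V]
    (g : GG.Game V C Bool)
    (hswo : ∀ p, GG.SWO (g.pref p))
    (hant : ∀ p q, g.pref false p q ↔ g.pref true q p) :
    (∀ sa, g.ValidStrat true sa → g.SubgameOptimal true sa →
      ∀ (l : List V), g.IsHist l → ∀ ρ, (g.future l).IsRun ρ →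
        (∃ s, (g.future l).Wins1 true ρ s) →
        (g.future l).Wins1 true ρ (GG.shiftStrat l sa)) ∧
    (∀ m : ℕ,
      (∀ (p : Bool) (l : List V), g.IsHist l → ∀ ρ, (g.future l).IsRun ρ →
        (∃ s, (g.future l).Wins1 p ρ s) ∨ ∃ s, (g.future l).Wins2 p ρ s) →
      (∀ p : Bool, ∃ s, g.ValidStrat p s ∧ g.SubgameOptimal p s ∧ GG.UsesMem m s) →
      ∀ (p : Bool) (l : List V), g.IsHist l → ∀ ρ, (g.future l).IsRun ρ →
        (∃ s, (g.future l).Wins1 p ρ s ∧ GG.UsesMem m s) ∨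
        ∃ s, (g.future l).Wins2 p ρ s ∧ GG.UsesMem m s) := by
  constructor
  · intro sa hval hopt l hl ρ hρ hw
    exact g.win1_shift true hval hopt hl hρ hw
  · intro m hdet hstrats p l hl ρ hρ
    rcases hdet p l hl ρ hρ with hw | hw
    · obtain ⟨sp, hval, hopt, hmem⟩ := hstrats p
      exact Or.inl ⟨shiftStrat l sp, g.win1_shift p hval hopt hl hρ hw,
        GG.shift_usesMem l hmem⟩
    · obtain ⟨sb, hval, hopt, hmem⟩ := hstrats (!p)
      exact Or.inr ⟨shiftStrat l sb, g.win2_shift hswo hant p hval hopt hl hρ hw,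
        GG.shift_usesMem l hmem⟩
end

section
/- Let g be a game on a finite graph, a a player with strict weak order preference ≺_a, h a history of g, s_a a strategy for a in the future game g^h, h' a history of g^h compatible with s_a, and s'_a a strategy for a in g^{h⌢h'}. Then: (1) h'⌢γ_a(h⌢h', s_a^{h'}) ⊆ γ_a(h, s_a); (2) if γ_a(h⌢h', s'_a) is a strict subset of γ_a(h⌢h', s_a^{h'}), then there exists ρ ∈ γ_a(h⌢h', s_a^{h'}) such that ρ ≺_a^{h⌢h'} ρ' for all ρ' ∈ γ_a(h⌢h', s'_a); (3) if γ_a(h⌢h', s'_a) ⊆ γ_a(h⌢h', s_a^{h'}), then h'⌢γ_a(h⌢h', s'_a) ⊆ γ_a(h, s_a). -/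
namespace GG

variable {V C A : Type}

lemma appSeq_lt' {l : List V} {ρ : ℕ → V} {n : ℕ} (hn : n < l.length) :
    appSeq l ρ n = l[n] := by
  simp [appSeq, hn, List.getD_eq_getElem]

lemma appSeq_ge' {l : List V} {ρ : ℕ → V} {n : ℕ} (hn : l.length ≤ n) :
    appSeq l ρ n = ρ (n - l.length) := by
  simp [appSeq, Nat.not_lt.mpr hn]

lemma appSeq_append' (u w : List V) (ρ : ℕ → V) :
    appSeq (u ++ w) ρ = appSeq u (appSeq w ρ) := by
  funext n
  rcases lt_or_ge n u.length with hn | hn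
  · rw [appSeq_lt' (by simp; omega), appSeq_lt' hn]
    simp [List.getElem_append, hn]
  · rw [appSeq_ge' hn]
    rcases lt_or_ge (n - u.length) w.length with hm | hm
    · rw [appSeq_lt' hm, appSeq_lt' (by simp; omega)]
      rw [List.getElem_append_right (by omega)]
    · rw [appSeq_ge' hm, appSeq_ge' (by simp; omega)]
      congr 1; simp; omega

lemma comp_appSeq (f : V → C) (l : List V) (ρ : ℕ → V) :
    (fun n => f (appSeq l ρ n)) = appSeq (l.map f) (fun n => f (ρ n)) := by
  funext n
  rcases lt_or_ge n l.length with hn | hn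
  · rw [appSeq_lt' hn, appSeq_lt' (by simpa using hn)]
    simp
  · rw [appSeq_ge' hn, appSeq_ge' (by simpa using hn)]
    simp

lemma chain'_getElem' {E : V → V → Prop} {l : List V} (hl : List.Chain' E l)
    {i : ℕ} (hi : i + 1 < l.length) :
    E (l[i]'(by omega)) (l[i+1]'hi) := by
  have := List.isChain_iff_getElem.mp hl i (by omega)
  simpa [List.get_eq_getElem] using this

lemma appSeq_chain {E : V → V → Prop} {l : List V} {ρ : ℕ → V}
    (hl : List.Chain' E (l ++ [ρ 0])) (hρ : ∀ n, E (ρ n) (ρ (n + 1))) :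
    ∀ n, E (appSeq l ρ n) (appSeq l ρ (n + 1)) := by
  intro n
  rcases lt_or_ge (n + 1) l.length with hn | hn
  · rw [appSeq_lt' (show n < l.length by omega), appSeq_lt' hn]
    have := chain'_getElem' hl (i := n) (by simp; omega)
    rwa [List.getElem_append_left (by omega), List.getElem_append_left hn] at this
  · rcases lt_or_ge n l.length with hn' | hn'
    · rw [appSeq_lt' hn', appSeq_ge' hn]
      have := chain'_getElem' hl (i := n) (by simp; omega)
      rw [List.getElem_append_left hn', List.getElem_append_right (by omega)] at this
      simpa [show n + 1 - l.length = 0 by omega] using this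
    · rw [appSeq_ge' hn', appSeq_ge' hn]
      rw [show n + 1 - l.length = (n - l.length) + 1 by omega]
      exact hρ _

lemma histUpTo_length (τ : ℕ → V) (n : ℕ) : (histUpTo τ n).length = n + 1 := by
  simp [histUpTo]

lemma histUpTo_getElem (τ : ℕ → V) (n i : ℕ) (hi : i < (histUpTo τ n).length) :
    (histUpTo τ n)[i] = τ i := by
  simp [histUpTo]

lemma histUpTo_appSeq (l : List V) (σ : ℕ → V) {n : ℕ} (hn : l.length ≤ n) :
    histUpTo (appSeq l σ) n = l ++ histUpTo σ (n - l.length) := by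
  apply List.ext_getElem
  · simp [histUpTo_length]; omega
  · intro i h1 h2
    rw [histUpTo_getElem]
    rcases lt_or_ge i l.length with hi | hi
    · rw [List.getElem_append_left hi, appSeq_lt' hi]
    · rw [List.getElem_append_right hi, histUpTo_getElem, appSeq_ge' hi]

lemma histUpTo_take {l : List V} {τ : ℕ → V} {n : ℕ} (hn : n < l.length)
    (he : ∀ k (hk : k ≤ n), τ k = l[k]'(by omega)) :
    histUpTo τ n = l.take (n + 1) := by
  apply List.ext_getElem
  · simp [histUpTo_length]; omega
  · intro i h1 h2
    rw [histUpTo_getElem, List.getElem_take]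
    exact he i (by rw [histUpTo_length] at h1; omega)

lemma lastV_ne (g : Game V C A) {l : List V} (hl : l ≠ []) :
    g.lastV l = l.getLast hl := by
  simp [Game.lastV, List.getLast?_eq_getLast_of_ne_nil hl]

lemma lastV_glueL (g : Game V C A) (h : List V) {h' : List V} (hne : h' ≠ []) :
    g.lastV (glueL h h') = h'.getLast hne := by
  have hg : glueL h h' ≠ [] := by simp [glueL, hne]
  rw [lastV_ne g hg]
  simp only [glueL]
  exact List.getLast_append_of_ne_nil _ hne

lemma glueR_lt {h' : List V} {ρ : ℕ → V} (hne : h' ≠ [])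
    (h0 : ρ 0 = h'.getLast hne) {k : ℕ} (hk : k < h'.length) :
    glueR h' ρ k = h'[k] := by
  rcases lt_or_ge k h'.dropLast.length with hk' | hk'
  · rw [glueR, appSeq_lt' hk', List.getElem_dropLast]
  · have hlen : h'.dropLast.length = h'.length - 1 := List.length_dropLast
    have hk0 : k = h'.length - 1 := by omega
    rw [glueR, appSeq_ge' hk', show k - h'.dropLast.length = 0 by omega, h0,
      List.getLast_eq_getElem]
    congr 1
    omega

lemma glueR_ge {h' : List V} {ρ : ℕ → V} {k : ℕ} (hk : h'.length - 1 ≤ k) :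
    glueR h' ρ k = ρ (k - (h'.length - 1)) := by
  have hlen : h'.dropLast.length = h'.length - 1 := List.length_dropLast
  rw [glueR, appSeq_ge' (by omega)]
  rw [hlen]

lemma glueR_isRun (g : Game V C A) (h : List V) {h' : List V}
    (hh' : (g.future h).IsHist h') {ρ : ℕ → V}
    (hρ : (g.future (glueL h h')).IsRun ρ) :
    (g.future h).IsRun (glueR h' ρ) := by
  obtain ⟨hne, hhead, hchain⟩ := hh'
  obtain ⟨h0, hedge⟩ := hρ
  have h0' : ρ 0 = h'.getLast hne := by
    rw [h0]; exact lastV_glueL g h hne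
  have hpos : 0 < h'.length := List.length_pos_iff.mpr hne
  constructor
  · rw [show (glueR h' ρ) 0 = h'[0] from glueR_lt hne h0' hpos, List.getElem_zero hpos]
    have := List.head?_eq_head (l := h') hne
    rw [hhead] at this
    exact (Option.some_injective _ this.symm)
  · intro n
    show g.edge (appSeq h'.dropLast ρ n) (appSeq h'.dropLast ρ (n + 1))
    apply appSeq_chain _ (fun n => hedge n)
    rw [h0', List.dropLast_append_getLast hne]
    exact hchain

lemma glueR_compat (g : Game V C A) (a : A) (h : List V) {h' : List V} (sa : List V → V)
    (hh' : (g.future h).IsHist h') (hcomp : (g.future h).HistCompat a sa h')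
    {ρ : ℕ → V} (h0 : ρ 0 = (g.future (glueL h h')).start)
    (hc : (g.future (glueL h h')).Compat a (shiftStrat h' sa) ρ) :
    (g.future h).Compat a sa (glueR h' ρ) := by
  obtain ⟨hne, hhead, hchain⟩ := hh'
  have h0' : ρ 0 = h'.getLast hne := by
    rw [h0]; exact lastV_glueL g h hne
  have hpos : 0 < h'.length := List.length_pos_iff.mpr hne
  have hlen : h'.dropLast.length = h'.length - 1 := List.length_dropLast
  intro n hown
  rcases lt_or_ge (n + 1) h'.length with hn | hn
  · rw [show (glueR h' ρ) (n + 1) = h'[n+1] from glueR_lt hne h0' hn]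
    have ht : histUpTo (glueR h' ρ) n = h'.take (n + 1) := by
      apply histUpTo_take (by omega)
      intro k hk
      exact glueR_lt hne h0' (by omega)
    rw [ht]
    have hown' : (g.future h).owner (h'.getD n (g.future h).start) = a := by
      rw [List.getD_eq_getElem _ _ (by omega)]
      rw [show (glueR h' ρ) n = h'[n]'(by omega) from glueR_lt hne h0' (by omega)] at hown
      exact hown
    have := hcomp n hn hown'
    rwa [List.getD_eq_getElem _ _ hn] at this
  · have hm : h'.length - 1 ≤ n := by omega
    rw [glueR_ge (by omega), show n + 1 - (h'.length - 1) = (n - (h'.length - 1)) + 1 by omega]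
    rw [glueR_ge hm] at hown
    have := hc (n - (h'.length - 1)) hown
    rw [this]
    show shiftStrat h' sa _ = sa _
    rw [shiftStrat]
    congr 1
    rw [show (glueR h' ρ) = appSeq h'.dropLast ρ from rfl,
      histUpTo_appSeq _ _ (by omega), hlen]

lemma runPref_glue (g : Game V C A) (a : A) (h : List V) {h' : List V} (hne : h' ≠ [])
    (ρ ρ' : ℕ → V) :
    (g.future h).runPref a (glueR h' ρ) (glueR h' ρ') ↔
      (g.future (glueL h h')).runPref a ρ ρ' := by
  have hd : (glueL h h').dropLast.map g.color
      = h.dropLast.map g.color ++ h'.dropLast.map g.color := by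
    rw [glueL, List.dropLast_append_of_ne_nil hne, List.map_append]
  show g.pref a (appSeq (h.dropLast.map g.color) fun n => g.color (appSeq h'.dropLast ρ n))
      (appSeq (h.dropLast.map g.color) fun n => g.color (appSeq h'.dropLast ρ' n))
    ↔ g.pref a (appSeq ((glueL h h').dropLast.map g.color) fun n => g.color (ρ n))
      (appSeq ((glueL h h').dropLast.map g.color) fun n => g.color (ρ' n))
  rw [comp_appSeq, comp_appSeq, ← appSeq_append', ← appSeq_append', hd]

lemma glue_mem_gam (g : Game V C A) (a : A) (h : List V) (sa : List V → V)
    {h' : List V} (hh' : (g.future h).IsHist h')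
    (hcomp : (g.future h).HistCompat a sa h')
    {ρ : ℕ → V} (hρ : ρ ∈ (g.future (glueL h h')).gam a (shiftStrat h' sa)) :
    glueR h' ρ ∈ (g.future h).gam a sa := by
  obtain ⟨hrun, ρ', hrun', hcpt', hpref⟩ := hρ
  exact ⟨glueR_isRun g h hh' hrun, glueR h' ρ', glueR_isRun g h hh' hrun',
    glueR_compat g a h sa hh' hcomp hrun'.1 hcpt',
    fun hc => hpref ((runPref_glue g a h hh'.1 ρ ρ').mp hc)⟩

end GG

open GG

/-- Lemma 4.1: basic facts about guarantees and future games. -/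
theorem stmt7
    {V C A : Type} [Fintype V]
    (g : GG.Game V C A) (a : A)
    (hswo : GG.SWO (g.pref a))
    (h : List V) (hh : g.IsHist h)
    (sa : List V → V) (hsa : (g.future h).ValidStrat a sa)
    (h' : List V) (hh' : (g.future h).IsHist h')
    (hcomp : (g.future h).HistCompat a sa h')
    (sa' : List V → V) (hsa' : (g.future (GG.glueL h h')).ValidStrat a sa') :
    -- (1)
    ((fun ρ => GG.glueR h' ρ) ''
        ((g.future (GG.glueL h h')).gam a (GG.shiftStrat h' sa))
      ⊆ (g.future h).gam a sa) ∧
    -- (2)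
    ((g.future (GG.glueL h h')).gam a sa' ⊂
        (g.future (GG.glueL h h')).gam a (GG.shiftStrat h' sa) →
      ∃ ρ ∈ (g.future (GG.glueL h h')).gam a (GG.shiftStrat h' sa),
        ∀ ρ' ∈ (g.future (GG.glueL h h')).gam a sa',
          (g.future (GG.glueL h h')).runPref a ρ ρ') ∧
    -- (3)
    ((g.future (GG.glueL h h')).gam a sa' ⊆
        (g.future (GG.glueL h h')).gam a (GG.shiftStrat h' sa) →
      (fun ρ => GG.glueR h' ρ) '' ((g.future (GG.glueL h h')).gam a sa')
        ⊆ (g.future h).gam a sa) := by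
  have part1 : (fun ρ => GG.glueR h' ρ) ''
        ((g.future (GG.glueL h h')).gam a (GG.shiftStrat h' sa))
      ⊆ (g.future h).gam a sa := by
    rintro _ ⟨ρ, hρ, rfl⟩
    exact glue_mem_gam g a h sa hh' hcomp hρ
  refine ⟨part1, ?_, fun hsub => subset_trans (Set.image_mono hsub) part1⟩
  intro hss
  obtain ⟨hsub, hne⟩ := hss
  obtain ⟨ρ, hρ, hρn⟩ := Set.not_subset.mp hne
  refine ⟨ρ, hρ, fun ρ' hρ' => ?_⟩
  obtain ⟨hrunρ, -⟩ := hρ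
  obtain ⟨hrun', ρ'', hrun'', hcpt'', hnp⟩ := hρ'
  have hall : ∀ σ, (g.future (GG.glueL h h')).IsRun σ →
      (g.future (GG.glueL h h')).Compat a sa' σ →
      (g.future (GG.glueL h h')).runPref a ρ σ := by
    intro σ h1 h2
    by_contra hq
    exact hρn ⟨hrunρ, σ, h1, h2, hq⟩
  have h1 : (g.future (GG.glueL h h')).runPref a ρ ρ'' := hall ρ'' hrun'' hcpt''
  by_contra hq
  exact hswo.2.2 _ _ _ hq hnp h1
end

section
/- Fix a set C of colors, a player a, and a strict weak order ≺_a on C^ω such that for every one-player game for a (with colors in C and preference ≺_a) there exists m ∈ ℕ such that a wins her winnable threshold games in it using uniformly finite memory m. Then in every antagonistic game with players a and b (colors in C, a's preference ≺_a), for every finite-memory strategy s_b of b there exists a finite-memory strategy s_a of a that is a best response to s_b. -/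
open GG

section AuxStmt8

open Classical

variable {V C A : Type}

theorem GG.my_exists_maximal {α : Type} (r : α → α → Prop)
    (htr : ∀ x y z, r x y → r y z → r x z) (hirr : ∀ x, ¬ r x x) :
    ∀ s : Finset α, s.Nonempty → ∃ x ∈ s, ∀ y ∈ s, ¬ r x y := by
  classical
  intro s
  induction s using Finset.induction_on with
  | empty => intro h; exact absurd rfl h.ne_empty
  | insert a t ha ih =>
    intro _
    by_cases ht : t.Nonempty
    · obtain ⟨x, hx, hmax⟩ := ih ht
      by_cases hxa : r x a
      · refine ⟨a, Finset.mem_insert_self _ _, ?_⟩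
        intro y hy hr
        rcases Finset.mem_insert.1 hy with rfl | hy
        · exact hirr y hr
        · exact hmax y hy (htr _ _ _ hxa hr)
      · refine ⟨x, Finset.mem_insert_of_mem hx, ?_⟩
        intro y hy hr
        rcases Finset.mem_insert.1 hy with rfl | hy
        · exact hxa hr
        · exact hmax y hy hr
    · rw [Finset.not_nonempty_iff_eq_empty] at ht
      subst ht
      refine ⟨a, Finset.mem_insert_self _ _, ?_⟩
      intro y hy hr
      rcases Finset.mem_insert.1 hy with rfl | hy
      · exact hirr y hr
      · exact absurd hy (Finset.notMem_empty y)

theorem GG.lastV_concat (g : Game V C A) (l : List V) (x : V) : g.lastV (l ++ [x]) = x := by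
  simp [Game.lastV]

theorem GG.play_zero (g : Game V C A) (prof : A → List V → V) : g.play prof 0 = g.start := by
  simp [Game.play, Game.playHist, Game.lastV]

theorem GG.playHist_succ (g : Game V C A) (prof : A → List V → V) (n : ℕ) :
    g.playHist prof (n + 1) = g.playHist prof n ++
      [prof (g.owner (g.play prof n)) (g.playHist prof n)] := rfl

theorem GG.play_succ (g : Game V C A) (prof : A → List V → V) (n : ℕ) :
    g.play prof (n + 1) = prof (g.owner (g.play prof n)) (g.playHist prof n) := by
  show g.lastV (g.playHist prof (n + 1)) = _
  rw [GG.playHist_succ, GG.lastV_concat]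

theorem GG.playHist_eq (g : Game V C A) (prof : A → List V → V) (n : ℕ) :
    g.playHist prof n = (List.range (n + 1)).map (g.play prof) := by
  induction n with
  | zero => simp [Game.playHist, List.range_succ, GG.play_zero]
  | succ n ih =>
      rw [List.range_succ, List.map_append, List.map_singleton, GG.play_succ, ← ih]
      exact GG.playHist_succ g prof n

theorem GG.histUpTo_play (g : Game V C A) (prof : A → List V → V) (n : ℕ) :
    GG.histUpTo (g.play prof) n = g.playHist prof n := (GG.playHist_eq g prof n).symm

theorem GG.lastV_histUpTo (g : Game V C A) (ρ : ℕ → V) (n : ℕ) :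
    g.lastV (GG.histUpTo ρ n) = ρ n := by
  simp [GG.histUpTo, Game.lastV, List.range_succ]

theorem GG.length_histUpTo (ρ : ℕ → V) (n : ℕ) :
    (GG.histUpTo ρ n : List V).length = n + 1 := by
  simp [GG.histUpTo]

theorem GG.playHist_isHist (g : Game V C A) (prof : A → List V → V)
    (hv : ∀ a, g.ValidStrat a (prof a)) (n : ℕ) : g.IsHist (g.playHist prof n) := by
  induction n with
  | zero => exact ⟨by simp [Game.playHist], by simp [Game.playHist], by simp only [Game.playHist]; exact List.isChain_singleton _⟩
  | succ n ih =>
      rw [GG.playHist_succ]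
      refine ⟨by simp, ?_, ?_⟩
      · rcases List.exists_cons_of_ne_nil ih.1 with ⟨a, t, hat⟩
        have hhd := ih.2.1
        rw [hat] at hhd ⊢
        simpa using hhd
      · show List.IsChain _ _; rw [List.isChain_append]
        refine ⟨ih.2.2, List.isChain_singleton _, ?_⟩
        intro x hx y hy
        simp only [List.head?_cons, Option.mem_some_iff] at hy
        rw [Option.mem_def] at hx
        have hlast : g.lastV (g.playHist prof n) = x := by simp [Game.lastV, hx]
        have hv2 := hv (g.owner (g.lastV (g.playHist prof n))) (g.playHist prof n) ih rfl
        rw [← hy, ← hlast]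
        exact hv2

theorem GG.play_isRun (g : Game V C A) (prof : A → List V → V)
    (hv : ∀ a, g.ValidStrat a (prof a)) : g.IsRun (g.play prof) := by
  refine ⟨GG.play_zero g prof, ?_⟩
  intro n
  rw [GG.play_succ]
  exact hv (g.owner (g.play prof n)) (g.playHist prof n) (GG.playHist_isHist g prof hv n) rfl

/-- The vertex-and-memory pair along the play of a one-profile machine strategy. -/
theorem GG.play_eq_iter (g : Game V C A) (s : List V → V) {β : Type}
    (σ : V × β → V × β) (M₀ : β)
    (hs : ∀ (l : List V) (v : V),
      s (l ++ [v]) = (σ (v, l.foldl (fun M u => (σ (u, M)).2) M₀)).1) (n : ℕ) :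
    (g.play (fun _ => s) n,
      ((List.range n).map (g.play (fun _ => s))).foldl (fun M u => (σ (u, M)).2) M₀)
      = σ^[n] (g.start, M₀) := by
  induction n with
  | zero => simp [GG.play_zero]
  | succ n ih =>
      rw [Function.iterate_succ_apply', ← ih]
      rw [List.range_succ, List.map_append, List.foldl_append]
      have h1 : g.play (fun _ => s) (n + 1)
          = s ((List.range n).map (g.play (fun _ => s)) ++ [g.play (fun _ => s) n]) := by
        rw [GG.play_succ, GG.playHist_eq, List.range_succ, List.map_append]
        rfl
      rw [h1, hs]
      rfl

/-- Strategy following a fixed run `ρ'`, with fallback moves elsewhere. -/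
noncomputable def GG.followStrat (g : Game V C A) (ρ' : ℕ → V) : List V → V :=
  fun l => if l = GG.histUpTo ρ' (l.length - 1) then ρ' l.length
           else Classical.choose (g.serial (g.lastV l))

theorem GG.followStrat_valid (g : Game V C A) (ρ' : ℕ → V) (hρ' : g.IsRun ρ')
    (P : V → Prop) : g.ValidOn P (GG.followStrat g ρ') := by
  intro l hl _
  unfold GG.followStrat
  by_cases h : l = GG.histUpTo ρ' (l.length - 1)
  · rw [if_pos h]
    have hpos : 0 < l.length := List.length_pos_iff.mpr hl.1
    have h2 : g.lastV l = ρ' (l.length - 1) := by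
      conv_lhs => rw [h]
      exact GG.lastV_histUpTo g ρ' _
    rw [h2]
    have := hρ'.2 (l.length - 1)
    rwa [Nat.sub_add_cancel hpos] at this
  · rw [if_neg h]
    exact Classical.choose_spec (g.serial (g.lastV l))

theorem GG.followStrat_compat (g : Game V C A) (ρ' ρ₂ : ℕ → V) (h0 : ρ₂ 0 = ρ' 0)
    (hc : ∀ n, ρ₂ (n + 1) = GG.followStrat g ρ' (GG.histUpTo ρ₂ n)) :
    ∀ n, ρ₂ n = ρ' n := by
  intro n
  induction n using Nat.strong_induction_on with
  | _ n ih =>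
    match n with
    | 0 => exact h0
    | Nat.succ n =>
      rw [hc n]
      have hl : GG.histUpTo ρ₂ n = GG.histUpTo ρ' n := by
        unfold GG.histUpTo
        refine List.map_congr_left ?_
        intro k hk
        exact ih k (by have := List.mem_range.1 hk; omega)
      rw [hl]
      unfold GG.followStrat
      simp [GG.length_histUpTo]

/-- The product of a game with the memory structure of a fixed strategy of
player `false`; all vertices belong to player `true`. -/
def GG.prodGame (g : Game V C Bool) (prec : (ℕ → C) → (ℕ → C) → Prop)
    {mb : ℕ} (σb : V × (Fin mb → Bool) → V × (Fin mb → Bool)) (Mb0 : Fin mb → Bool) :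
    Game (V × (Fin mb → Bool)) C Bool where
  edge p q := q.2 = (σb (p.1, p.2)).2 ∧
    (if g.owner p.1 = true then g.edge p.1 q.1 else q.1 = (σb (p.1, p.2)).1)
  serial p := by
    by_cases h : g.owner p.1 = true
    · obtain ⟨w, hw⟩ := g.serial p.1
      exact ⟨(w, (σb (p.1, p.2)).2), rfl, by simp [h, hw]⟩
    · exact ⟨((σb (p.1, p.2)).1, (σb (p.1, p.2)).2), rfl, by simp [h]⟩
  start := (g.start, Mb0)
  owner _ := true
  color p := g.color p.1
  pref _ := prec

end AuxStmt8

section AuxStmt8b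

variable {V C : Type}

/-- The memory-merging equivalence. -/
def GG.mergeE (mb m : ℕ) : (Fin (mb + m) → Bool) ≃ ((Fin mb → Bool) × (Fin m → Bool)) :=
  (Equiv.arrowCongr finSumFinEquiv.symm (Equiv.refl Bool)).trans
    (Equiv.sumArrowEquivProdArrow _ _ _)

open Classical in
/-- The strategic update of player `true` built from a machine `τ` on the product game. -/
noncomputable def GG.sigA (g : Game V C Bool) {mb m : ℕ}
    (τ : (V × (Fin mb → Bool)) × (Fin m → Bool) → (V × (Fin mb → Bool)) × (Fin m → Bool))
    (E : (Fin (mb + m) → Bool) ≃ ((Fin mb → Bool) × (Fin m → Bool)))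
    (x : V × (Fin (mb + m) → Bool)) : V × (Fin (mb + m) → Bool) :=
  (if g.edge x.1 (τ ((x.1, (E x.2).1), (E x.2).2)).1.1
     then (τ ((x.1, (E x.2).1), (E x.2).2)).1.1
     else Classical.choose (g.serial x.1),
   E.symm ((τ ((x.1, (E x.2).1), (E x.2).2)).1.2, (τ ((x.1, (E x.2).1), (E x.2).2)).2))

open Classical in
theorem GG.sigA_fst (g : Game V C Bool) {mb m : ℕ}
    (τ : (V × (Fin mb → Bool)) × (Fin m → Bool) → (V × (Fin mb → Bool)) × (Fin m → Bool))
    (E : (Fin (mb + m) → Bool) ≃ ((Fin mb → Bool) × (Fin m → Bool)))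
    (v : V) (M : Fin mb → Bool) (N : Fin m → Bool) :
    (GG.sigA g τ E (v, E.symm (M, N))).1
      = if g.edge v (τ ((v, M), N)).1.1 then (τ ((v, M), N)).1.1
        else Classical.choose (g.serial v) := by
  have hE : E (E.symm (M, N)) = (M, N) := E.apply_symm_apply _
  unfold GG.sigA
  rw [hE]

theorem GG.sigA_snd (g : Game V C Bool) {mb m : ℕ}
    (τ : (V × (Fin mb → Bool)) × (Fin m → Bool) → (V × (Fin mb → Bool)) × (Fin m → Bool))
    (E : (Fin (mb + m) → Bool) ≃ ((Fin mb → Bool) × (Fin m → Bool)))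
    (v : V) (M : Fin mb → Bool) (N : Fin m → Bool) :
    (GG.sigA g τ E (v, E.symm (M, N))).2
      = E.symm ((τ ((v, M), N)).1.2, (τ ((v, M), N)).2) := by
  have hE : E (E.symm (M, N)) = (M, N) := E.apply_symm_apply _
  unfold GG.sigA
  rw [hE]

theorem GG.sigA_edge (g : Game V C Bool) {mb m : ℕ}
    (τ : (V × (Fin mb → Bool)) × (Fin m → Bool) → (V × (Fin mb → Bool)) × (Fin m → Bool))
    (E : (Fin (mb + m) → Bool) ≃ ((Fin mb → Bool) × (Fin m → Bool)))
    (x : V × (Fin (mb + m) → Bool)) : g.edge x.1 (GG.sigA g τ E x).1 := by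
  unfold GG.sigA
  dsimp only
  split
  · assumption
  · exact Classical.choose_spec (g.serial x.1)

/-- The strategy induced by a strategic update. -/
def GG.machStrat (start : V) {μ : ℕ} (σ : V × (Fin μ → Bool) → V × (Fin μ → Bool))
    (K₀ : Fin μ → Bool) (l : List V) : V :=
  (σ (l.getLast?.getD start, l.dropLast.foldl (fun K u => (σ (u, K)).2) K₀)).1

theorem GG.machStrat_concat (start : V) {μ : ℕ}
    (σ : V × (Fin μ → Bool) → V × (Fin μ → Bool)) (K₀ : Fin μ → Bool)
    (l : List V) (v : V) :
    GG.machStrat start σ K₀ (l ++ [v])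
      = (σ (v, l.foldl (fun K u => (σ (u, K)).2) K₀)).1 := by
  unfold GG.machStrat
  rw [List.getLast?_concat, List.dropLast_concat]
  rfl

theorem GG.machStrat_usesMem (start : V) {μ : ℕ}
    (σ : V × (Fin μ → Bool) → V × (Fin μ → Bool)) (K₀ : Fin μ → Bool) :
    GG.UsesMem μ (GG.machStrat start σ K₀) :=
  ⟨σ, K₀, fun l v => GG.machStrat_concat start σ K₀ l v⟩

end AuxStmt8b

/-- Lemma 4.4.1: if player `a` wins her winnable threshold games in every
one-player game using uniformly finite memory, then in every antagonistic game
every finite-memory strategy of the opponent is met with a finite-memory best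
response by `a`. Player `a` is `true`, player `b` is `false`. -/
theorem stmt8
    {C : Type}
    (prec : (ℕ → C) → (ℕ → C) → Prop) (hswo : GG.SWO prec)
    (hone : ∀ (V' : Type) [Fintype V'] (g' : GG.Game V' C Bool),
      (∀ v, g'.owner v = true) → g'.pref true = prec →
      ∃ m, ∀ ρ, g'.IsRun ρ → (∃ s, g'.Wins1 true ρ s) →
        ∃ s, g'.Wins1 true ρ s ∧ GG.UsesMem m s) :
    ∀ (V : Type) [Fintype V] (g : GG.Game V C Bool),
      g.pref true = prec → (∀ p q, g.pref false p q ↔ prec q p) →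
      ∀ sb, g.ValidStrat false sb → GG.FinMem sb →
        ∃ sa, g.ValidStrat true sa ∧ GG.FinMem sa ∧
          ∀ sa', g.ValidStrat true sa' →
            ¬ g.runPref true (g.play (fun p => if p = true then sa else sb))
                (g.play (fun p => if p = true then sa' else sb)) := by
  intro V instV g hpt hpf sb hsbv hsbfm
  classical
  obtain ⟨mb, σb, Mb0, hsb⟩ := hsbfm
  let g' := GG.prodGame g prec σb Mb0
  obtain ⟨m, hm⟩ := hone (V × (Fin mb → Bool)) g' (fun _ => rfl) rfl
  let P := (((V × (Fin mb → Bool)) × (Fin m → Bool) →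
      (V × (Fin mb → Bool)) × (Fin m → Bool)) × (Fin m → Bool))
  let vrun : P → ℕ → V × (Fin mb → Bool) := fun p n => (p.1^[n] (g'.start, p.2)).1
  let S : Finset P := Finset.univ.filter fun p => g'.IsRun (vrun p)
  -- S is nonempty
  have hSne : S.Nonempty := by
    refine ⟨(fun q => (Classical.choose (g'.serial q.1), q.2), fun _ => false), ?_⟩
    refine Finset.mem_filter.mpr ⟨Finset.mem_univ _, ?_⟩
    refine ⟨rfl, ?_⟩
    intro n
    have h1 : ∀ k, vrun (fun q => (Classical.choose (g'.serial q.1), q.2), fun _ => false) (k + 1)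
        = Classical.choose (g'.serial
            (vrun (fun q => (Classical.choose (g'.serial q.1), q.2), fun _ => false) k)) := by
      intro k
      show ((fun q : (V × (Fin mb → Bool)) × (Fin m → Bool) =>
          (Classical.choose (g'.serial q.1), q.2))^[k + 1] _).1 = _
      rw [Function.iterate_succ_apply']
    rw [h1 n]
    exact Classical.choose_spec (g'.serial _)
  -- a maximal machine run
  obtain ⟨pstar, hpS, hpmax⟩ := GG.my_exists_maximal
    (fun p q : P => prec (fun n => g'.color (vrun p n)) (fun n => g'.color (vrun q n)))
    (fun x y z hxy hyz => hswo.2.1 _ _ _ hxy hyz) (fun x => hswo.1 _) S hSne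
  have hρrun : g'.IsRun (vrun pstar) := (Finset.mem_filter.1 hpS).2
  -- Claim A : vrun pstar is maximal among all runs of the product game
  have claimA : ∀ ρ', g'.IsRun ρ' →
      ¬ prec (fun n => g'.color (vrun pstar n)) (fun n => g'.color (ρ' n)) := by
    intro ρ' hρ' hlt
    have hwin : ∃ s, g'.Wins1 true (vrun pstar) s := by
      refine ⟨GG.followStrat g' ρ', GG.followStrat_valid g' ρ' hρ' _, ?_⟩
      intro ρ₂ h2r h2c
      have heq : ∀ n, ρ₂ n = ρ' n := by
        refine GG.followStrat_compat g' ρ' ρ₂ (by rw [h2r.1, hρ'.1]) ?_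
        intro n
        exact h2c n rfl
      have hcc : (fun n => g'.color (ρ₂ n)) = fun n => g'.color (ρ' n) := by
        funext n; rw [heq n]
      show prec (fun n => g'.color (vrun pstar n)) (fun n => g'.color (ρ₂ n))
      rw [hcc]
      exact hlt
    obtain ⟨s, hsW, σ, M₀, hσ⟩ := hm (vrun pstar) hρrun hwin
    have hrun2 : g'.IsRun (g'.play fun _ => s) := by
      refine GG.play_isRun g' _ ?_
      intro a
      cases a
      · intro l hl hlo
        exact absurd hlo (by exact fun h => Bool.noConfusion h)
      · exact hsW.1
    have hcomp : g'.Compat true s (g'.play fun _ => s) := by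
      intro n _
      rw [GG.histUpTo_play]
      exact GG.play_succ g' _ n
    have hpref := hsW.2 _ hrun2 hcomp
    have heq2 : ∀ n, (g'.play fun _ => s) n = vrun (σ, M₀) n := by
      intro n
      exact congrArg Prod.fst (GG.play_eq_iter g' s σ M₀ hσ n)
    have hmem : (σ, M₀) ∈ S := by
      refine Finset.mem_filter.mpr ⟨Finset.mem_univ _, ?_⟩
      have hfe : vrun (σ, M₀) = g'.play fun _ => s := by funext n; rw [heq2 n]
      rw [hfe]
      exact hrun2
    apply hpmax (σ, M₀) hmem
    have hfe2 : (fun n => g'.color (vrun (σ, M₀) n))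
        = fun n => g'.color ((g'.play fun _ => s) n) := by
      funext n; rw [heq2 n]
    rw [hfe2]
    exact hpref
  -- the best-response strategy
  let E := GG.mergeE mb m
  let σa := GG.sigA g pstar.1 E
  let K₀ : Fin (mb + m) → Bool := E.symm (Mb0, pstar.2)
  let sa := GG.machStrat g.start σa K₀
  have hsaEq : ∀ (l : List V) (v : V),
      sa (l ++ [v]) = (σa (v, l.foldl (fun K u => (σa (u, K)).2) K₀)).1 :=
    fun l v => GG.machStrat_concat g.start σa K₀ l v
  have hsaU : GG.UsesMem (mb + m) sa := GG.machStrat_usesMem g.start σa K₀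
  have hsaV : g.ValidStrat true sa := by
    intro l hl _
    exact GG.sigA_edge g pstar.1 E
      (g.lastV l, l.dropLast.foldl (fun K u => (σa (u, K)).2) K₀)
  have hσa1 : ∀ (v : V) (M : Fin mb → Bool) (N : Fin m → Bool),
      (σa (v, E.symm (M, N))).1
        = if g.edge v (pstar.1 ((v, M), N)).1.1 then (pstar.1 ((v, M), N)).1.1
          else Classical.choose (g.serial v) :=
    fun v M N => GG.sigA_fst g pstar.1 E v M N
  have hσa2 : ∀ (v : V) (M : Fin mb → Bool) (N : Fin m → Bool),
      (σa (v, E.symm (M, N))).2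
        = E.symm ((pstar.1 ((v, M), N)).1.2, (pstar.1 ((v, M), N)).2) :=
    fun v M N => GG.sigA_snd g pstar.1 E v M N
  -- the combined iterate
  let π : ℕ → ((V × (Fin mb → Bool)) × (Fin m → Bool)) :=
    fun n => pstar.1^[n] ((g.start, Mb0), pstar.2)
  have hedge' : ∀ n, ((π (n + 1)).1).2 = (σb ((π n).1.1, (π n).1.2)).2 ∧
      (if g.owner (π n).1.1 = true then g.edge (π n).1.1 (π (n + 1)).1.1
       else (π (n + 1)).1.1 = (σb ((π n).1.1, (π n).1.2)).1) := by
    intro n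
    exact hρrun.2 n
  have hτ : ∀ n, pstar.1 (((π n).1.1, (π n).1.2), (π n).2) = π (n + 1) := by
    intro n
    show pstar.1 (π n) = π (n + 1)
    exact (Function.iterate_succ_apply' pstar.1 n _).symm
  let prof : Bool → List V → V := fun p => if p = true then sa else sb
  have hprofV : ∀ a, g.ValidStrat a (prof a) := by
    intro a; cases a
    · exact hsbv
    · exact hsaV
  -- the play of (sa, sb) follows π
  have key : ∀ n, g.play prof n = (π n).1.1 ∧
      ((List.range n).map (g.play prof)).foldl (fun M u => (σb (u, M)).2) Mb0 = (π n).1.2 ∧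
      ((List.range n).map (g.play prof)).foldl (fun K u => (σa (u, K)).2) K₀
        = E.symm ((π n).1.2, (π n).2) := by
    intro n
    induction n with
    | zero => exact ⟨GG.play_zero g prof, rfl, rfl⟩
    | succ n ih =>
        obtain ⟨h1, h2, h3⟩ := ih
        have hplay : g.play prof (n + 1)
            = prof (g.owner ((π n).1.1)) ((List.range n).map (g.play prof) ++ [(π n).1.1]) := by
          rw [GG.play_succ, GG.playHist_eq, List.range_succ, List.map_append,
            List.map_singleton, h1]
        refine ⟨?_, ?_, ?_⟩
        · rw [hplay]
          by_cases how : g.owner ((π n).1.1) = true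
          · rw [how]
            show sa ((List.range n).map (g.play prof) ++ [(π n).1.1]) = (π (n + 1)).1.1
            rw [hsaEq, h3, hσa1, hτ]
            have hedge2 : g.edge (π n).1.1 (π (n + 1)).1.1 := by
              have h5 := (hedge' n).2
              rwa [if_pos how] at h5
            rw [if_pos hedge2]
          · have how' : g.owner ((π n).1.1) = false := by
              cases hcase : g.owner ((π n).1.1)
              · rfl
              · exact absurd hcase how
            rw [how']
            show sb ((List.range n).map (g.play prof) ++ [(π n).1.1]) = (π (n + 1)).1.1
            rw [hsb, h2]
            have h5 := (hedge' n).2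
            rw [if_neg (by rw [how']; simp)] at h5
            exact h5.symm
        · rw [List.range_succ, List.map_append, List.map_singleton, List.foldl_append,
            List.foldl_cons, List.foldl_nil, h2, h1]
          exact ((hedge' n).1).symm
        · rw [List.range_succ, List.map_append, List.map_singleton, List.foldl_append,
            List.foldl_cons, List.foldl_nil, h3, h1, hσa2, hτ]
  refine ⟨sa, hsaV, ⟨mb + m, hsaU⟩, ?_⟩
  intro sa' hsa'V
  let prof' : Bool → List V → V := fun p => if p = true then sa' else sb
  show ¬ g.runPref true (g.play prof) (g.play prof')
  have hprof'V : ∀ a, g.ValidStrat a (prof' a) := by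
    intro a; cases a
    · exact hsbv
    · exact hsa'V
  let foldB : ℕ → (Fin mb → Bool) :=
    fun n => ((List.range n).map (g.play prof')).foldl (fun M u => (σb (u, M)).2) Mb0
  have hLrun : g'.IsRun (fun n => (g.play prof' n, foldB n)) := by
    constructor
    · show (g.play prof' 0, foldB 0) = (g.start, Mb0)
      rw [GG.play_zero]
      rfl
    · intro n
      refine ⟨?_, ?_⟩
      · show foldB (n + 1) = (σb (g.play prof' n, foldB n)).2
        show ((List.range (n + 1)).map (g.play prof')).foldl
            (fun M u => (σb (u, M)).2) Mb0 = _
        rw [List.range_succ, List.map_append, List.map_singleton, List.foldl_append,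
          List.foldl_cons, List.foldl_nil]
      · show if g.owner (g.play prof' n) = true
            then g.edge (g.play prof' n) (g.play prof' (n + 1))
            else g.play prof' (n + 1) = (σb (g.play prof' n, foldB n)).1
        by_cases how : g.owner (g.play prof' n) = true
        · rw [if_pos how]
          rw [GG.play_succ, how]
          show g.edge (g.play prof' n) (sa' (g.playHist prof' n))
          exact hsa'V (g.playHist prof' n) (GG.playHist_isHist g prof' hprof'V n) how
        · have how' : g.owner (g.play prof' n) = false := by
            cases hcase : g.owner (g.play prof' n)
            · rfl
            · exact absurd hcase how
          rw [if_neg how]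
          rw [GG.play_succ, how']
          show sb (g.playHist prof' n) = (σb (g.play prof' n, foldB n)).1
          rw [GG.playHist_eq, List.range_succ, List.map_append, List.map_singleton, hsb]
  have hfin := claimA _ hLrun
  intro hcon
  have hcon2 : prec (fun n => g.color (g.play prof n)) (fun n => g.color (g.play prof' n)) := by
    have hcon3 : g.pref true (fun n => g.color (g.play prof n))
        (fun n => g.color (g.play prof' n)) := hcon
    rwa [hpt] at hcon3
  apply hfin
  have e1 : (fun n => g'.color (vrun pstar n)) = fun n => g.color (g.play prof n) := by
    funext n
    exact congrArg g.color ((key n).1).symm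
  rw [e1]
  exact hcon2
end

section
/- Let g be an antagonistic game with players a and b, and suppose there is m ∈ ℕ such that for every run ρ the threshold game g_{a,ρ} is determined via a winning strategy using m bits of memory. Then Γ_a ∩ Γ_b is nonempty and contains a regular (ultimately periodic) run; that is, the value of g has a regular witness. -/
open GG


namespace Aux12
open GG

theorem exists_best {α β : Type*} (r : β → β → Prop)
    (htrans : ∀ x y z, r x y → r y z → r x z)
    (htot : ∀ x y, r x y ∨ r y x) :
    ∀ (l : List α), l ≠ [] → ∀ (f : α → β), ∃ a ∈ l, ∀ b ∈ l, r (f b) (f a) := by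
  intro l
  induction l with
  | nil => intro h; exact absurd rfl h
  | cons x xs ih =>
    intro _ f
    rcases eq_or_ne xs [] with h | h
    · subst h
      refine ⟨x, List.mem_cons_self, ?_⟩
      intro b hb
      simp only [List.mem_singleton, List.mem_cons, List.not_mem_nil, or_false] at hb
      subst hb
      rcases htot (f b) (f b) with h | h <;> exact h
    · obtain ⟨a, ha, hbest⟩ := ih h f
      rcases htot (f x) (f a) with hx | hx
      · refine ⟨a, List.mem_cons_of_mem _ ha, ?_⟩
        intro b hb
        rcases List.mem_cons.1 hb with rfl | hb
        · exact hx
        · exact hbest b hb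
      · refine ⟨x, List.mem_cons_self, ?_⟩
        intro b hb
        rcases List.mem_cons.1 hb with rfl | hb
        · rcases htot (f b) (f b) with h | h <;> exact h
        · exact htrans _ _ _ (hbest b hb) hx

theorem finset_exists_best {α β : Type*} (r : β → β → Prop)
    (htrans : ∀ x y z, r x y → r y z → r x z)
    (htot : ∀ x y, r x y ∨ r y x)
    (s : Finset α) (hs : s.Nonempty) (f : α → β) :
    ∃ a ∈ s, ∀ b ∈ s, r (f b) (f a) := by
  obtain ⟨a, ha, h⟩ := exists_best r htrans htot s.toList
    (by simp [Finset.toList_eq_nil]; rintro rfl; exact Finset.not_nonempty_empty hs) f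
  exact ⟨a, (Finset.mem_toList).1 ha, fun b hb => h b ((Finset.mem_toList).2 hb)⟩

theorem ult_of_step {S : Type} [Fintype S] (F : S → S) (f : ℕ → S)
    (h : ∀ n, f (n + 1) = F (f n)) :
    ∃ k p : ℕ, 0 < p ∧ ∀ n, k ≤ n → f (n + p) = f n := by
  classical
  have hiter : ∀ n, f n = F^[n] (f 0) := by
    intro n
    induction n with
    | zero => rfl
    | succ n ih => rw [h n, ih]; exact (Function.iterate_succ_apply' F n (f 0)).symm
  have key : ∀ i j : ℕ, i < j → f i = f j →
      ∃ k p, 0 < p ∧ ∀ n, k ≤ n → f (n + p) = f n := by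
    intro i j hij hfe
    refine ⟨i, j - i, by omega, ?_⟩
    intro n hn
    have h1 : n + (j - i) = (n - i) + j := by omega
    have h2 : n = (n - i) + i := by omega
    rw [hiter (n + (j - i)), h1, Function.iterate_add_apply, ← hiter j, ← hfe, hiter i,
      ← Function.iterate_add_apply, ← h2, ← hiter n]
  obtain ⟨i, hi, j, hj, hne, heq⟩ :=
    Finset.exists_ne_map_eq_of_card_lt_of_maps_to
      (s := Finset.range (Fintype.card S + 1)) (t := (Finset.univ : Finset S)) (f := f)
      (by simp) (fun a _ => Finset.mem_univ _)
  rcases lt_or_gt_of_ne hne with hlt | hlt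
  · exact key i j hlt heq
  · exact key j i hlt heq.symm

variable {V C : Type}

/-- An `m`-bit machine. -/
abbrev Machine (V : Type) (m : ℕ) : Type :=
  (V × (Fin m → Bool) → V × (Fin m → Bool)) × (Fin m → Bool)

/-- The strategy induced by a machine. -/
def stratOf (g : GG.Game V C Bool) {m : ℕ} (t : Machine V m) : List V → V :=
  fun l => (t.1 (g.lastV l, l.dropLast.foldl (fun M u => (t.1 (u, M)).2) t.2)).1

lemma lastV_concat (g : GG.Game V C Bool) (l : List V) (x : V) :
    g.lastV (l ++ [x]) = x := by
  simp [GG.Game.lastV]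

lemma lastV_nil (g : GG.Game V C Bool) : g.lastV [] = g.start := rfl

lemma dropLast_append_lastV (g : GG.Game V C Bool) {l : List V} (h : l ≠ []) :
    l.dropLast ++ [g.lastV l] = l := by
  have h1 : l.getLast? = some (l.getLast h) := List.getLast?_eq_getLast h
  have h2 : g.lastV l = l.getLast h := by simp [GG.Game.lastV, h1]
  rw [h2]
  exact List.dropLast_append_getLast h

lemma stratOf_concat (g : GG.Game V C Bool) {m : ℕ} (t : Machine V m) (l : List V) (v : V) :
    stratOf g t (l ++ [v]) = (t.1 (v, l.foldl (fun M u => (t.1 (u, M)).2) t.2)).1 := by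
  simp [stratOf, lastV_concat]

lemma agree_of_usesMem (g : GG.Game V C Bool) {m : ℕ} {s : List V → V}
    (σ : V × (Fin m → Bool) → V × (Fin m → Bool)) (M₀ : Fin m → Bool)
    (hs : ∀ (l : List V) (v : V),
      s (l ++ [v]) = (σ (v, l.foldl (fun M u => (σ (u, M)).2) M₀)).1) :
    ∀ l : List V, l ≠ [] → s l = stratOf g (σ, M₀) l := by
  intro l hl
  conv_lhs => rw [← dropLast_append_lastV g hl]
  conv_rhs => rw [← dropLast_append_lastV g hl]
  rw [hs, stratOf_concat]

section Plays

variable (g : GG.Game V C Bool) (sa sb : List V → V)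

/-- The two-strategy profile. -/
def prof : Bool → List V → V := fun p => if p = true then sa else sb

lemma playHist_ne_nil : ∀ n, g.playHist (prof sa sb) n ≠ [] := by
  intro n
  cases n with
  | zero => simp [GG.Game.playHist]
  | succ n => simp [GG.Game.playHist]

lemma playHist_succ (n : ℕ) :
    g.playHist (prof sa sb) (n + 1) =
      g.playHist (prof sa sb) n ++
        [prof sa sb (g.owner (g.play (prof sa sb) n)) (g.playHist (prof sa sb) n)] := rfl

lemma play_succ (n : ℕ) :
    g.play (prof sa sb) (n + 1) =
      prof sa sb (g.owner (g.play (prof sa sb) n)) (g.playHist (prof sa sb) n) := by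
  show g.lastV _ = _
  rw [playHist_succ, lastV_concat]

lemma playHist_eq_histUpTo :
    ∀ n, g.playHist (prof sa sb) n = GG.histUpTo (g.play (prof sa sb)) n := by
  intro n
  induction n with
  | zero =>
    have h1 : List.range 1 = [0] := rfl
    simp only [GG.histUpTo]
    rw [h1]
    simp [GG.Game.playHist, GG.Game.play, GG.Game.lastV]
  | succ n ih =>
    rw [GG.histUpTo, List.range_succ, List.map_append, ← GG.histUpTo, ← ih]
    rw [playHist_succ, ← play_succ]
    simp [GG.Game.play]

lemma edge_next (ha : g.ValidStrat true sa) (hb : g.ValidCo true sb)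
    {h : List V} (hh : g.IsHist h) :
    g.edge (g.lastV h) (prof sa sb (g.owner (g.lastV h)) h) := by
  cases howner : g.owner (g.lastV h) with
  | true => simpa [prof] using ha h hh howner
  | false =>
    have := hb h hh (by simp [howner])
    simpa [prof] using this

lemma playHist_isHist (ha : g.ValidStrat true sa) (hb : g.ValidCo true sb) :
    ∀ n, g.IsHist (g.playHist (prof sa sb) n) := by
  intro n
  induction n with
  | zero =>
    refine ⟨by simp [GG.Game.playHist], by simp [GG.Game.playHist], ?_⟩
    simp [GG.Game.playHist]
    exact List.isChain_singleton _
  | succ n ih =>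
    rw [playHist_succ]
    obtain ⟨hne, hhead, hchain⟩ := ih
    refine ⟨by simp, ?_, ?_⟩
    · rw [List.head?_append]
      rw [hhead]
      rfl
    · rw [show List.Chain' g.edge _ = List.IsChain g.edge _ from rfl, List.isChain_append]
      refine ⟨hchain, List.isChain_singleton _, ?_⟩
      intro x hx y hy
      simp only [List.head?_cons, Option.mem_def, Option.some.injEq] at hy
      subst hy
      have hxl : x = g.lastV (g.playHist (prof sa sb) n) := by
        simp only [Option.mem_def] at hx
        simp [GG.Game.lastV, hx]
      subst hxl
      exact edge_next g sa sb ha hb ⟨hne, hhead, hchain⟩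

lemma play_isRun (ha : g.ValidStrat true sa) (hb : g.ValidCo true sb) :
    g.IsRun (g.play (prof sa sb)) := by
  constructor
  · simp [GG.Game.play, GG.Game.playHist, GG.Game.lastV]
  · intro n
    rw [play_succ]
    exact edge_next g sa sb ha hb (playHist_isHist g sa sb ha hb n)

lemma play_compat : g.Compat true sa (g.play (prof sa sb)) := by
  intro n hn
  rw [play_succ, ← playHist_eq_histUpTo, hn]
  rfl

lemma play_compatCo : g.CompatCo true sb (g.play (prof sa sb)) := by
  intro n hn
  have hfalse : g.owner (g.play (prof sa sb) n) = false := by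
    cases h : g.owner (g.play (prof sa sb) n) with
    | true => exact absurd h hn
    | false => rfl
  rw [play_succ, ← playHist_eq_histUpTo, hfalse]
  rfl

end Plays

lemma histUpTo_ne_nil (ρ : ℕ → V) (n : ℕ) : GG.histUpTo ρ n ≠ [] := by
  simp [GG.histUpTo, List.range_succ]

lemma validOn_congr (g : GG.Game V C Bool) (P : V → Prop) {s s' : List V → V}
    (hag : ∀ l : List V, l ≠ [] → s l = s' l) (h : g.ValidOn P s) : g.ValidOn P s' := by
  intro l hl hp
  rw [← hag l hl.1]
  exact h l hl hp

lemma compatOn_congr (P : V → Prop) {s s' : List V → V} {ρ : ℕ → V}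
    (hag : ∀ l : List V, l ≠ [] → s l = s' l) (h : GG.CompatOn P s ρ) :
    GG.CompatOn P s' ρ := by
  intro n hn
  rw [h n hn, hag _ (histUpTo_ne_nil ρ n)]


lemma play_ult [Fintype V] (g : GG.Game V C Bool) {m : ℕ} (ta tb : Machine V m) :
    GG.UltPeriodic (g.play (prof (stratOf g ta) (stratOf g tb))) := by
  classical
  have hstep : ∀ n : ℕ,
      (g.play (prof (stratOf g ta) (stratOf g tb)) (n + 1),
        (g.playHist (prof (stratOf g ta) (stratOf g tb)) (n + 1)).dropLast.foldl
          (fun M u => (ta.1 (u, M)).2) ta.2,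
        (g.playHist (prof (stratOf g ta) (stratOf g tb)) (n + 1)).dropLast.foldl
          (fun M u => (tb.1 (u, M)).2) tb.2) =
      (fun x : V × (Fin m → Bool) × (Fin m → Bool) =>
        (if g.owner x.1 = true then (ta.1 (x.1, x.2.1)).1 else (tb.1 (x.1, x.2.2)).1,
          (ta.1 (x.1, x.2.1)).2, (tb.1 (x.1, x.2.2)).2))
      (g.play (prof (stratOf g ta) (stratOf g tb)) n,
        (g.playHist (prof (stratOf g ta) (stratOf g tb)) n).dropLast.foldl
          (fun M u => (ta.1 (u, M)).2) ta.2,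
        (g.playHist (prof (stratOf g ta) (stratOf g tb)) n).dropLast.foldl
          (fun M u => (tb.1 (u, M)).2) tb.2) := by
    intro n
    have hdl : (g.playHist (prof (stratOf g ta) (stratOf g tb)) (n + 1)).dropLast =
        g.playHist (prof (stratOf g ta) (stratOf g tb)) n := by
      rw [playHist_succ]
      exact List.dropLast_concat
    have hsplit : g.playHist (prof (stratOf g ta) (stratOf g tb)) n =
        (g.playHist (prof (stratOf g ta) (stratOf g tb)) n).dropLast ++
          [g.play (prof (stratOf g ta) (stratOf g tb)) n] :=
      (dropLast_append_lastV g (playHist_ne_nil g _ _ n)).symm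
    have hfold : ∀ (f : (Fin m → Bool) → V → (Fin m → Bool)) (M : Fin m → Bool),
        (g.playHist (prof (stratOf g ta) (stratOf g tb)) n).foldl f M =
          f ((g.playHist (prof (stratOf g ta) (stratOf g tb)) n).dropLast.foldl f M)
            (g.play (prof (stratOf g ta) (stratOf g tb)) n) := by
      intro f M
      conv_lhs => rw [hsplit]
      rw [List.foldl_append]
      rfl
    rw [play_succ, hdl, hfold (fun M u => (ta.1 (u, M)).2) ta.2,
      hfold (fun M u => (tb.1 (u, M)).2) tb.2]
    beta_reduce
    by_cases howner : g.owner (g.play (prof (stratOf g ta) (stratOf g tb)) n) = true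
    · rw [howner]
      rfl
    · have hf : g.owner (g.play (prof (stratOf g ta) (stratOf g tb)) n) = false := by
        simpa using howner
      rw [hf]
      rfl
  obtain ⟨k, p, hp, hper⟩ :=
    ult_of_step
      (S := V × (Fin m → Bool) × (Fin m → Bool))
      (fun x =>
        (if g.owner x.1 = true then (ta.1 (x.1, x.2.1)).1 else (tb.1 (x.1, x.2.2)).1,
          (ta.1 (x.1, x.2.1)).2, (tb.1 (x.1, x.2.2)).2))
      (fun n =>
        (g.play (prof (stratOf g ta) (stratOf g tb)) n,
          (g.playHist (prof (stratOf g ta) (stratOf g tb)) n).dropLast.foldl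
            (fun M u => (ta.1 (u, M)).2) ta.2,
          (g.playHist (prof (stratOf g ta) (stratOf g tb)) n).dropLast.foldl
            (fun M u => (tb.1 (u, M)).2) tb.2))
      hstep
  exact ⟨k, p, hp, fun n hn => congrArg Prod.fst (hper n hn)⟩

end Aux12

open Aux12

/-- Corollary 4.4: if an antagonistic game is finite-memory determined, its
value `Γ_a ∩ Γ_b` is nonempty and has a regular witness. Player `a` is `true`,
player `b` is `false`. -/
theorem stmt12
    {V C : Type} [Fintype V]
    (g : GG.Game V C Bool)
    (hswo : ∀ p, GG.SWO (g.pref p))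
    (hant : ∀ p q, g.pref false p q ↔ g.pref true q p)
    (m : ℕ)
    (hdet : ∀ ρ, g.IsRun ρ →
      (∃ s, g.Wins1 true ρ s ∧ GG.UsesMem m s) ∨
      ∃ s, g.Wins2 true ρ s ∧ GG.UsesMem m s) :
    ∃ ρ, g.IsRun ρ ∧ GG.UltPeriodic ρ ∧ ρ ∈ g.Gam true ∩ g.Gam false := by
    classical
  obtain ⟨irr, tr, ntr⟩ := hswo true
  have hRtrans : ∀ x y z : ℕ → V, g.runPref true x y → g.runPref true y z →
      g.runPref true x z := fun x y z h1 h2 => tr _ _ _ h1 h2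
  have hRirr : ∀ x : ℕ → V, ¬ g.runPref true x x := fun x => irr _
  have hNtrans : ∀ x y z : ℕ → V, ¬ g.runPref true x y → ¬ g.runPref true y z →
      ¬ g.runPref true x z := fun x y z h1 h2 => ntr _ _ _ h1 h2
  set lep : (ℕ → V) → (ℕ → V) → Prop := fun x y => ¬ g.runPref true y x with hlepdef
  have lep_trans : ∀ x y z : ℕ → V, lep x y → lep y z → lep x z :=
    fun x y z h1 h2 => hNtrans _ _ _ h2 h1
  have lep_tot : ∀ x y : ℕ → V, lep x y ∨ lep y x := by
    intro x y
    by_cases h1 : g.runPref true y x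
    · right
      intro h2
      exact hRirr x (hRtrans _ _ _ h2 h1)
    · left
      exact h1
  have lt_lep : ∀ x y z : ℕ → V, g.runPref true x y → lep y z → g.runPref true x z := by
    intro x y z h1 h2
    by_contra h3
    exact (hNtrans _ _ _ h3 h2) h1
  choose nxt hnxt using g.serial
  have hSA : ∃ SA : Finset (Machine V m),
      ∀ t, t ∈ SA ↔ g.ValidStrat true (stratOf g t) :=
    ⟨Finset.univ.filter (fun t => g.ValidStrat true (stratOf g t)), by
      intro t; simp⟩
  obtain ⟨SA, hSAmem⟩ := hSA
  have hSB : ∃ SB : Finset (Machine V m),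
      ∀ t, t ∈ SB ↔ g.ValidCo true (stratOf g t) :=
    ⟨Finset.univ.filter (fun t => g.ValidCo true (stratOf g t)), by
      intro t; simp⟩
  obtain ⟨SB, hSBmem⟩ := hSB
  have ht0A : g.ValidStrat true
      (stratOf g ((fun p => (nxt p.1, p.2), fun _ => false) : Machine V m)) :=
    fun l _ _ => hnxt _
  have ht0B : g.ValidCo true
      (stratOf g ((fun p => (nxt p.1, p.2), fun _ => false) : Machine V m)) :=
    fun l _ _ => hnxt _
  have hSAne : SA.Nonempty := ⟨_, (hSAmem _).2 ht0A⟩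
  have hSBne : SB.Nonempty := ⟨_, (hSBmem _).2 ht0B⟩
  have winsA : ∀ (ρ : ℕ → V) (s : List V → V), g.Wins1 true ρ s → GG.UsesMem m s →
      ∃ t : Machine V m, t ∈ SA ∧
        ∀ ρ', g.IsRun ρ' → g.Compat true (stratOf g t) ρ' → g.runPref true ρ ρ' := by
    intro ρ s hw hm
    obtain ⟨σ, M₀, hs⟩ := hm
    have hag := agree_of_usesMem g σ M₀ hs
    have hag' : ∀ l : List V, l ≠ [] → stratOf g (σ, M₀) l = s l :=
      fun l hl => (hag l hl).symm
    refine ⟨(σ, M₀), (hSAmem _).2 (validOn_congr g _ hag hw.1), ?_⟩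
    intro ρ' h1 h2
    exact hw.2 ρ' h1 (compatOn_congr _ hag' h2)
  have winsB : ∀ (ρ : ℕ → V) (s : List V → V), g.Wins2 true ρ s → GG.UsesMem m s →
      ∃ t : Machine V m, t ∈ SB ∧
        ∀ ρ', g.IsRun ρ' → g.CompatCo true (stratOf g t) ρ' → ¬ g.runPref true ρ ρ' := by
    intro ρ s hw hm
    obtain ⟨σ, M₀, hs⟩ := hm
    have hag := agree_of_usesMem g σ M₀ hs
    have hag' : ∀ l : List V, l ≠ [] → stratOf g (σ, M₀) l = s l :=
      fun l hl => (hag l hl).symm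
    refine ⟨(σ, M₀), (hSBmem _).2 (validOn_congr g _ hag hw.1), ?_⟩
    intro ρ' h1 h2
    exact hw.2 ρ' h1 (compatOn_congr _ hag' h2)
  have hmin : ∀ ta : Machine V m, ∃ tb ∈ SB, ∀ tb' ∈ SB,
      lep (g.play (prof (stratOf g ta) (stratOf g tb)))
        (g.play (prof (stratOf g ta) (stratOf g tb'))) := by
    intro ta
    obtain ⟨tb, htb, h⟩ := finset_exists_best (fun x y => lep y x)
      (fun x y z h1 h2 => lep_trans _ _ _ h2 h1) (fun x y => lep_tot y x)
      SB hSBne (fun tb => g.play (prof (stratOf g ta) (stratOf g tb)))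
    exact ⟨tb, htb, h⟩
  choose mb hmbmem hmbmin using hmin
  obtain ⟨tas, htas, hP3⟩ := finset_exists_best lep lep_trans lep_tot SA hSAne
    (fun ta => g.play (prof (stratOf g ta) (stratOf g (mb ta))))
  set ρs := g.play (prof (stratOf g tas) (stratOf g (mb tas))) with hρs
  have hVAs : g.ValidStrat true (stratOf g tas) := (hSAmem _).1 htas
  have hVBs : g.ValidCo true (stratOf g (mb tas)) := (hSBmem _).1 (hmbmem tas)
  have hrun : g.IsRun ρs := play_isRun g _ _ hVAs hVBs
  have hult : GG.UltPeriodic ρs := play_ult g tas (mb tas)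
  have hB : ∃ sbw, g.Wins2 true ρs sbw ∧ GG.UsesMem m sbw := by
    rcases hdet ρs hrun with ⟨s, hw, hm⟩ | h
    · exfalso
      obtain ⟨t, htSA, hwin⟩ := winsA ρs s hw hm
      have hVA : g.ValidStrat true (stratOf g t) := (hSAmem _).1 htSA
      have hVB : g.ValidCo true (stratOf g (mb t)) := (hSBmem _).1 (hmbmem t)
      have hlt := hwin (g.play (prof (stratOf g t) (stratOf g (mb t))))
        (play_isRun g _ _ hVA hVB) (play_compat g _ _)
      exact hP3 t htSA hlt
    · exact h
  obtain ⟨sbw, hsbw, _⟩ := hB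
  have hGa : ρs ∈ g.Gam true := by
    simp only [GG.Game.Gam, Set.mem_iInter, Set.mem_setOf_eq]
    intro s hs
    simp only [GG.Game.gam, Set.mem_setOf_eq]
    refine ⟨hrun, g.play (prof s sbw), play_isRun g _ _ hs hsbw.1,
      play_compat g _ _, ?_⟩
    exact hsbw.2 _ (play_isRun g _ _ hs hsbw.1) (play_compatCo g _ _)
  have hGb : ρs ∈ g.Gam false := by
    simp only [GG.Game.Gam, Set.mem_iInter, Set.mem_setOf_eq]
    intro sb hsb
    have hsb' : g.ValidCo true sb := fun l hl hp => hsb l hl (by simpa using hp)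
    simp only [GG.Game.gam, Set.mem_setOf_eq]
    refine ⟨hrun, ?_⟩
    by_contra hcon
    push_neg at hcon
    have hall : ∀ ρ', g.IsRun ρ' → g.CompatCo true sb ρ' → g.runPref true ρ' ρs := by
      intro ρ' h1 h2
      have h3 := hcon ρ' h1 (fun n hn => h2 n (by simp [hn]))
      exact (hant _ _).1 h3
    obtain ⟨tam, htam, hmax'⟩ := finset_exists_best lep lep_trans lep_tot SA hSAne
      (fun ta => g.play (prof (stratOf g ta) sb))
    have hVAm : g.ValidStrat true (stratOf g tam) := (hSAmem _).1 htam
    have hρhrun : g.IsRun (g.play (prof (stratOf g tam) sb)) :=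
      play_isRun g _ _ hVAm hsb'
    have hlt1 : g.runPref true (g.play (prof (stratOf g tam) sb)) ρs :=
      hall _ hρhrun (play_compatCo g _ _)
    rcases hdet (g.play (prof (stratOf g tam) sb)) hρhrun with ⟨s, hw, hm⟩ | ⟨s, hw, hm⟩
    · obtain ⟨t, htSA, hwin⟩ := winsA _ s hw hm
      have hVA : g.ValidStrat true (stratOf g t) := (hSAmem _).1 htSA
      have h5 := hwin (g.play (prof (stratOf g t) sb)) (play_isRun g _ _ hVA hsb')
        (play_compat g _ _)
      exact hmax' t htSA h5
    · obtain ⟨t, htSB, hwin⟩ := winsB _ s hw hm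
      have hVB : g.ValidCo true (stratOf g t) := (hSBmem _).1 htSB
      have hnlt := hwin (g.play (prof (stratOf g tas) (stratOf g t)))
        (play_isRun g _ _ hVAs hVB) (play_compatCo g _ _)
      have hlep : lep ρs (g.play (prof (stratOf g tas) (stratOf g t))) :=
        hmbmin tas t htSB
      exact hnlt (lt_lep _ _ _ hlt1 hlep)
  exact ⟨ρs, hrun, hult, hGa, hGb⟩
end
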